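/- For every finite sequence of positive reals there exists a finite sequence of positive integers whose cardinal function has the same range. That is, if M is the range of the cardinal function of some finite positive real sequence, then M is also the range of the cardinal function of some finite sequence of positive integers. -/

import Mathlib

open Set

/-- The achievement set of a finite sequence. -/
def achSetF {N : ℕ} (x : Fin N → ℝ) : Set ℝ :=
  {t | ∃ S : Finset (Fin N), ∑ n ∈ S, x n = t}

/-- The cardinal function of a finite sequence. -/
noncomputable def cardFunF {N : ℕ} (x : Fin N → ℝ) (t : ℝ) : ℕ :=
  Nat.card {S : Finset (Fin N) // ∑ n ∈ S, x n = t}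

lemma cardFun_image_eq_range {N : ℕ} (x : Fin N → ℝ) :
    cardFunF x '' achSetF x =
      Set.range (fun S₀ : Finset (Fin N) =>
        Nat.card {S : Finset (Fin N) // ∑ n ∈ S, x n = ∑ n ∈ S₀, x n}) := by
  ext n
  constructor
  · rintro ⟨t, ⟨S₀, rfl⟩, rfl⟩
    exact ⟨S₀, rfl⟩
  · rintro ⟨S₀, rfl⟩
    exact ⟨∑ n ∈ S₀, x n, ⟨S₀, rfl⟩, rfl⟩

lemma image_eq_of_iff {N : ℕ} (x z : Fin N → ℝ)
    (h : ∀ S T : Finset (Fin N), (∑ n ∈ S, x n = ∑ n ∈ T, x n) ↔ (∑ n ∈ S, z n = ∑ n ∈ T, z n)) :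
    cardFunF x '' achSetF x = cardFunF z '' achSetF z := by
  rw [cardFun_image_eq_range, cardFun_image_eq_range]
  have : (fun S₀ : Finset (Fin N) =>
        Nat.card {S : Finset (Fin N) // ∑ n ∈ S, x n = ∑ n ∈ S₀, x n})
      = (fun S₀ : Finset (Fin N) =>
        Nat.card {S : Finset (Fin N) // ∑ n ∈ S, z n = ∑ n ∈ S₀, z n}) :=
    funext fun S₀ => Nat.card_congr (Equiv.subtypeEquivRight fun S => h S S₀)
  rw [this]

theorem stmt17 (N : ℕ) (x : Fin N → ℝ) (hpos : ∀ i, 0 < x i) :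
    ∃ (M : ℕ) (y : Fin M → ℕ), (∀ i, 0 < y i) ∧
      cardFunF x '' achSetF x =
        cardFunF (fun i => (y i : ℝ)) '' achSetF (fun i => (y i : ℝ)) := by
  classical
  -- the ℚ-span of the values
  set V : Submodule ℚ ℝ := Submodule.span ℚ (Set.range x) with hV
  haveI : Module.Finite ℚ V := Module.Finite.span_of_finite ℚ (Set.finite_range x)
  set ι := Module.Free.ChooseBasisIndex ℚ V
  set b : Module.Basis ι ℚ V := Module.Free.chooseBasis ℚ V with hb
  have hxv : ∀ i, x i ∈ V := fun i => Submodule.subset_span ⟨i, rfl⟩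
  set xv : Fin N → V := fun i => ⟨x i, hxv i⟩ with hxvdef
  set c : Fin N → ι → ℚ := fun i j => b.repr (xv i) j with hc
  -- x i in terms of the basis
  have hx : ∀ i, x i = ∑ j, (c i j : ℝ) * (b j : ℝ) := by
    intro i
    have := b.sum_repr (xv i)
    have h2 : ((∑ j, b.repr (xv i) j • b j : V) : ℝ) = x i := by rw [this]
    rw [← h2]
    push_cast
    simp [Rat.smul_def, hc]
  -- equal subset sums give equal coordinates
  have hcoord : ∀ S T : Finset (Fin N), (∑ n ∈ S, x n = ∑ n ∈ T, x n) →
      ∀ j, ∑ n ∈ S, c n j = ∑ n ∈ T, c n j := by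
    intro S T hST j
    have hsum : (∑ n ∈ S, xv n) = ∑ n ∈ T, xv n := by
      apply Subtype.ext
      push_cast
      exact hST
    have := congrArg (fun v => b.repr v j) hsum
    simpa [map_sum, hc] using this
  -- the parametrized family
  set F : (ι → ℝ) → Fin N → ℝ := fun v i => ∑ j, (c i j : ℝ) * v j with hF
  have hFx : F (fun j => (b j : ℝ)) = x := by
    funext i; exact (hx i).symm
  have hFcont : ∀ (S : Finset (Fin N)), Continuous (fun v => ∑ n ∈ S, F v n) := by
    intro S
    apply continuous_finset_sum
    intro i _
    apply continuous_finset_sum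
    intro j _
    exact continuous_const.mul (continuous_apply j)
  have hFeq : ∀ (v : ι → ℝ) (S T : Finset (Fin N)), (∑ n ∈ S, x n = ∑ n ∈ T, x n) →
      ∑ n ∈ S, F v n = ∑ n ∈ T, F v n := by
    intro v S T hST
    simp only [hF]
    rw [Finset.sum_comm, Finset.sum_comm (s := T)]
    congr 1
    funext j
    rw [← Finset.sum_mul, ← Finset.sum_mul]
    have := hcoord S T hST j
    congr 1
    exact_mod_cast this
  -- the open set of good parameters
  set U : Set (ι → ℝ) := {v | (∀ i, 0 < F v i) ∧ ∀ S T : Finset (Fin N),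
      (∑ n ∈ S, x n ≠ ∑ n ∈ T, x n) → ∑ n ∈ S, F v n ≠ ∑ n ∈ T, F v n} with hU
  have hUopen : IsOpen U := by
    have h1 : U = (⋂ i, {v | 0 < F v i}) ∩ ⋂ S : Finset (Fin N), ⋂ T : Finset (Fin N),
        {v | (∑ n ∈ S, x n ≠ ∑ n ∈ T, x n) → ∑ n ∈ S, F v n ≠ ∑ n ∈ T, F v n} := by
      ext v
      simp [hU, Set.mem_iInter]
    rw [h1]
    apply IsOpen.inter
    · apply isOpen_iInter_of_finite
      intro i
      have : Continuous (fun v => F v i) := by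
        apply continuous_finset_sum
        intro j _
        exact continuous_const.mul (continuous_apply j)
      exact isOpen_lt continuous_const this
    · apply isOpen_iInter_of_finite
      intro S
      apply isOpen_iInter_of_finite
      intro T
      by_cases hST : ∑ n ∈ S, x n = ∑ n ∈ T, x n
      · have : {v : ι → ℝ | (∑ n ∈ S, x n ≠ ∑ n ∈ T, x n) → ∑ n ∈ S, F v n ≠ ∑ n ∈ T, F v n}
            = Set.univ := by
          ext v; simp [hST]
        rw [this]; exact isOpen_univ
      · have : {v : ι → ℝ | (∑ n ∈ S, x n ≠ ∑ n ∈ T, x n) → ∑ n ∈ S, F v n ≠ ∑ n ∈ T, F v n}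
            = {v : ι → ℝ | ∑ n ∈ S, F v n ≠ ∑ n ∈ T, F v n} := by
          ext v; simp [hST]
        rw [this]
        exact isOpen_ne_fun (hFcont S) (hFcont T)
  have hUne : (fun j => ((b j : ℝ))) ∈ U := by
    constructor
    · intro i
      rw [show F (fun j => ((b j : ℝ))) i = x i from congrFun hFx i]
      exact hpos i
    · intro S T hST h
      apply hST
      rw [show (∑ n ∈ S, F (fun j => ((b j : ℝ))) n) = ∑ n ∈ S, x n by rw [hFx],
        show (∑ n ∈ T, F (fun j => ((b j : ℝ))) n) = ∑ n ∈ T, x n by rw [hFx]] at h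
      exact h
  -- rational points are dense
  have hdense : Dense {v : ι → ℝ | ∀ j, v j ∈ Set.range ((↑) : ℚ → ℝ)} := by
    have := dense_pi (α := fun _ : ι => ℝ) (s := fun _ => Set.range ((↑) : ℚ → ℝ))
      Set.univ (fun i _ => Rat.denseRange_cast)
    apply this.mono
    intro v hv j
    exact hv j (Set.mem_univ j)
  obtain ⟨v, hvD, hvU⟩ := hdense.exists_mem_open hUopen ⟨_, hUne⟩
  choose q hq using hvD
  -- the rational sequence
  set r : Fin N → ℚ := fun i => ∑ j, c i j * q j with hr
  have hrF : ∀ i, ((r i : ℝ)) = F v i := by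
    intro i
    simp only [hr, hF]
    push_cast
    congr 1
    funext j
    rw [hq j]
  have hrpos : ∀ i, 0 < r i := by
    intro i
    have := hvU.1 i
    rw [← hrF i] at this
    exact_mod_cast this
  have hriff : ∀ S T : Finset (Fin N),
      (∑ n ∈ S, x n = ∑ n ∈ T, x n) ↔ (∑ n ∈ S, r n = ∑ n ∈ T, r n) := by
    intro S T
    constructor
    · intro h
      have := hFeq v S T h
      rw [show (∑ n ∈ S, F v n) = ((∑ n ∈ S, r n : ℚ) : ℝ) by push_cast [hrF]; rfl,
        show (∑ n ∈ T, F v n) = ((∑ n ∈ T, r n : ℚ) : ℝ) by push_cast [hrF]; rfl] at this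
      exact_mod_cast this
    · intro h
      by_contra hne
      apply hvU.2 S T hne
      rw [show (∑ n ∈ S, F v n) = ((∑ n ∈ S, r n : ℚ) : ℝ) by push_cast [hrF]; rfl,
        show (∑ n ∈ T, F v n) = ((∑ n ∈ T, r n : ℚ) : ℝ) by push_cast [hrF]; rfl]
      exact_mod_cast h
  -- clear denominators
  set D : ℕ := ∏ i, (r i).den with hD
  have hDpos : 0 < D := Finset.prod_pos (fun i _ => (r i).pos)
  have hdvd : ∀ i, (r i).den ∣ D := fun i => Finset.dvd_prod_of_mem _ (Finset.mem_univ i)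
  set y : Fin N → ℕ := fun i => ((r i).num * (D / (r i).den : ℕ)).toNat with hy
  have hyQ : ∀ i, ((y i : ℚ)) = r i * D := by
    intro i
    obtain ⟨m, hm⟩ := hdvd i
    have hm' : (D / (r i).den : ℕ) = m := by rw [hm]; exact Nat.mul_div_cancel_left m (r i).pos
    have hnum : 0 < (r i).num := Rat.num_pos.mpr (hrpos i)
    have : ((r i).num * (D / (r i).den : ℕ) : ℤ) ≥ 0 := by positivity
    rw [hy]
    simp only
    have h2 : ((((r i).num * ((D / (r i).den : ℕ) : ℤ)).toNat : ℤ) : ℚ)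
        = (((r i).num * ((D / (r i).den : ℕ) : ℤ) : ℤ) : ℚ) := by
      exact_mod_cast congrArg (fun t : ℤ => (t : ℚ)) (Int.toNat_of_nonneg this)
    rw [show ((((r i).num * ((D / (r i).den : ℕ) : ℤ)).toNat : ℕ) : ℚ)
        = ((((r i).num * ((D / (r i).den : ℕ) : ℤ)).toNat : ℤ) : ℚ) by push_cast; ring]
    rw [h2]
    have hmul : ∀ s : ℚ, s * (s.den : ℚ) = s.num := by
      intro s
      have hd : ((s.den : ℚ)) ≠ 0 := by exact_mod_cast s.den_ne_zero
      have h := Rat.num_div_den s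
      rw [div_eq_iff hd] at h
      exact h.symm
    push_cast [hm']
    rw [hm]
    push_cast
    rw [← hmul (r i)]
    ring
  have hypos : ∀ i, 0 < y i := by
    intro i
    have : (0 : ℚ) < (y i : ℚ) := by
      rw [hyQ i]
      have := hrpos i
      positivity
    exact_mod_cast this
  refine ⟨N, y, hypos, ?_⟩
  apply image_eq_of_iff
  intro S T
  rw [hriff S T]
  have key : ∀ S' : Finset (Fin N), ∑ n ∈ S', ((y n : ℝ)) = ((∑ n ∈ S', r n : ℚ) : ℝ) * D := by
    intro S'
    push_cast
    rw [Finset.sum_mul]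
    refine Finset.sum_congr rfl fun n _ => ?_
    exact_mod_cast congrArg (fun t : ℚ => (t : ℝ)) (hyQ n)
  rw [key S, key T]
  constructor
  · intro h; rw [h]
  · intro h
    have hD' : (D : ℝ) ≠ 0 := by positivity
    have := mul_right_cancel₀ hD' h
    exact_mod_cast this
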